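/- arXiv:1510.08914 — 4 statements merged into one kernel-verified Lean document; each statement's English description precedes it below -/
import Mathlib

section
/- Let A be a unital associative ring and let x, b ∈ A satisfy [x, b] = b. Then for every natural number n ≥ 1, the iterated commutator satisfies [b², x², x², ..., x²] (with x² appearing n times) = (-4)ⁿ b² (x+1)ⁿ. -/
/-- The left-normed iterated Lie commutator `[a, b, b, ..., b]` (`n` copies of `b`). -/
def lieIter {A : Type*} [Ring A] (a b : A) : ℕ → A
  | 0 => a
  | n + 1 => lieIter a b n * b - b * lieIter a b n

/-- in a unital associative ring, if `[x, b] = b`, then for every `n ≥ 1`,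
`[b², x², ..., x²]` (with `x²` appearing `n` times) equals `(-4)ⁿ b² (x+1)ⁿ`. -/
theorem stmt4 (A : Type*) [Ring A] (x b : A) (h : x * b - b * x = b) :
    ∀ n : ℕ, 1 ≤ n → lieIter (b ^ 2) (x ^ 2) n = (-4 : A) ^ n * b ^ 2 * (x + 1) ^ n := by
  have h0 : x * b - b * x - b = 0 := by rw [h]; simp
  -- x b² = b² (x+2)
  have hxb2 : x * b ^ 2 = b ^ 2 * (x + 2) := by
    have e : x * b ^ 2 - b ^ 2 * (x + 2) =
        (x * b - b * x - b) * b + b * (x * b - b * x - b) := by noncomm_ring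
    rw [h0] at e
    simp only [zero_mul, mul_zero, add_zero] at e
    exact sub_eq_zero.mp e
  -- x² b² = b² (x+2)²
  have hx2 : x ^ 2 * b ^ 2 = b ^ 2 * (x + 2) ^ 2 := by
    have e : x ^ 2 * b ^ 2 - b ^ 2 * (x + 2) ^ 2 =
        x * (x * b ^ 2 - b ^ 2 * (x + 2)) + (x * b ^ 2 - b ^ 2 * (x + 2)) * (x + 2) := by
      noncomm_ring
    rw [hxb2] at e
    simp only [sub_self, mul_zero, zero_mul, add_zero] at e
    exact sub_eq_zero.mp e
  have hx20 : x ^ 2 * b ^ 2 - b ^ 2 * (x + 2) ^ 2 = 0 := by rw [hx2]; simp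
  have hc : Commute (x + 1) (x ^ 2) := by unfold Commute SemiconjBy; noncomm_ring
  -- key step: commutator with x² multiplies by -4(x+1)
  have key : ∀ m : ℕ, b ^ 2 * (x + 1) ^ m * x ^ 2 - x ^ 2 * (b ^ 2 * (x + 1) ^ m) =
      (-4 : A) * (b ^ 2 * (x + 1) ^ (m + 1)) := by
    intro m
    have hcm0 : (x + 1) ^ m * x ^ 2 - x ^ 2 * (x + 1) ^ m = 0 := by
      rw [sub_eq_zero]; exact (hc.pow_left m).eq
    rw [pow_succ' (x + 1) m]
    have e : b ^ 2 * (x + 1) ^ m * x ^ 2 - x ^ 2 * (b ^ 2 * (x + 1) ^ m)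
        - (-4 : A) * (b ^ 2 * ((x + 1) * (x + 1) ^ m)) =
        -((x ^ 2 * b ^ 2 - b ^ 2 * (x + 2) ^ 2) * (x + 1) ^ m)
          + b ^ 2 * ((x + 1) ^ m * x ^ 2 - x ^ 2 * (x + 1) ^ m) := by
      noncomm_ring
    rw [hcm0, hx20] at e
    simp only [zero_mul, mul_zero, neg_zero, add_zero] at e
    exact sub_eq_zero.mp e
  -- centrality of (-4)^n
  have hcent : ∀ n : ℕ, ∀ y : A, (-4 : A) ^ n * y = y * (-4 : A) ^ n := by
    intro n y
    have : Commute ((-4 : A)) y := by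
      simpa using (Int.cast_commute (-4 : ℤ) y)
    exact (this.pow_left n).eq
  intro n hn
  induction n with
  | zero => omega
  | succ n ih =>
    rcases Nat.eq_zero_or_pos n with hz | hpos
    · subst hz
      show b ^ 2 * x ^ 2 - x ^ 2 * b ^ 2 = _
      have := key 0
      simp only [pow_zero, mul_one, zero_add, pow_one] at this ⊢
      rw [this]; noncomm_ring
    · show lieIter (b ^ 2) (x ^ 2) n * x ^ 2 - x ^ 2 * lieIter (b ^ 2) (x ^ 2) n = _
      rw [ih hpos]
      have step1 : (-4 : A) ^ n * b ^ 2 * (x + 1) ^ n * x ^ 2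
          - x ^ 2 * ((-4 : A) ^ n * b ^ 2 * (x + 1) ^ n)
          = (-4 : A) ^ n * (b ^ 2 * (x + 1) ^ n * x ^ 2 - x ^ 2 * (b ^ 2 * (x + 1) ^ n)) := by
        have hQ : x ^ 2 * (-4 : A) ^ n - (-4 : A) ^ n * x ^ 2 = 0 := by
          rw [sub_eq_zero]; exact (hcent n (x ^ 2)).symm
        have e : (-4 : A) ^ n * b ^ 2 * (x + 1) ^ n * x ^ 2
            - x ^ 2 * ((-4 : A) ^ n * b ^ 2 * (x + 1) ^ n)
            - (-4 : A) ^ n * (b ^ 2 * (x + 1) ^ n * x ^ 2 - x ^ 2 * (b ^ 2 * (x + 1) ^ n))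
            = -((x ^ 2 * (-4 : A) ^ n - (-4 : A) ^ n * x ^ 2) * (b ^ 2 * (x + 1) ^ n)) := by
          noncomm_ring
        rw [hQ] at e
        simp only [zero_mul, neg_zero] at e
        exact sub_eq_zero.mp e
      rw [step1, key n, pow_succ]
      noncomm_ring
end

section
/- Let A be an associative algebra over a commutative ring, and let x, y ∈ A be such that z = [x,y] commutes with both x and y. Then for every natural number r ≥ 1, the iterated commutator [x², (2xy - z), (2xy - z), ..., (2xy - z)] with 2xy - z appearing r times equals 4ʳ x² zʳ. -/
/-- if `z = [x,y]` commutes with `x` and `y`, then for every `r ≥ 1`,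
`[x², (2xy - z), ..., (2xy - z)]` (`r` times) equals `4ʳ x² zʳ`. -/
theorem stmt6 (R A : Type*) [CommRing R] [Ring A] [Algebra R A]
    (x y z : A) (hz : z = x * y - y * x) (hxz : x * z = z * x) (hyz : y * z = z * y) :
    ∀ r : ℕ, 1 ≤ r →
      lieIter (x ^ 2) (2 * (x * y) - z) r = (4 : A) ^ r * x ^ 2 * z ^ r := by
  set w : A := 2 * (x * y) - z with hwdef
  have hxy : x * y = y * x + z := by rw [hz]; noncomm_ring
  have h2 : x ^ 2 * z = z * x ^ 2 := by
    rw [pow_two, mul_assoc, hxz, ← mul_assoc, hxz, mul_assoc]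
  have h3 : x ^ 2 * y = y * x ^ 2 + 2 * (x * z) := by
    calc x ^ 2 * y = x * (x * y) := by rw [pow_two, mul_assoc]
    _ = x * (y * x) + x * z := by rw [hxy]; noncomm_ring
    _ = (x * y) * x + x * z := by rw [mul_assoc]
    _ = ((y * x) + z) * x + x * z := by rw [hxy]
    _ = y * x ^ 2 + z * x + x * z := by noncomm_ring
    _ = y * x ^ 2 + 2 * (x * z) := by rw [← hxz]; noncomm_ring
  have key : x ^ 2 * w - w * x ^ 2 = 4 * x ^ 2 * z := by
    rw [hwdef, hxy]
    calc x ^ 2 * (2 * (y * x + z) - z) - (2 * (y * x + z) - z) * x ^ 2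
        = 2 * ((x ^ 2 * y) * x) + (x ^ 2 * z) - 2 * (y * (x ^ 2 * x)) - z * x ^ 2 := by
          noncomm_ring
      _ = 2 * ((y * x ^ 2 + 2 * (x * z)) * x) + (z * x ^ 2) - 2 * (y * (x ^ 2 * x)) - z * x ^ 2 := by
          rw [h3, h2]
      _ = 4 * (x * (z * x)) := by noncomm_ring
      _ = 4 * (x * (x * z)) := by rw [hxz]
      _ = 4 * x ^ 2 * z := by noncomm_ring
  have hwz : Commute w z := by
    have h1 : Commute (x * y) z := Commute.mul_left hxz hyz
    have h2c : Commute (2 : A) z := by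
      have : ((2 : ℕ) : A) * z = z * ((2 : ℕ) : A) := (Nat.cast_commute 2 z)
      simpa [Commute, SemiconjBy] using this
    exact (h2c.mul_left h1).sub_left (Commute.refl z)
  intro r _
  clear * - key hwz
  induction r with
  | zero => simp [lieIter]
  | succ n ih =>
    have h4 : ∀ a : A, Commute ((4 : A) ^ n) a := fun a => by
      refine Commute.pow_left ?_ n
      have : ((4 : ℕ) : A) * a = a * ((4 : ℕ) : A) := Nat.cast_commute 4 a
      simpa [Commute, SemiconjBy] using this
    have hzn : z ^ n * w = w * z ^ n := ((hwz.symm).pow_left n)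
    show lieIter (x ^ 2) w n * w - w * lieIter (x ^ 2) w n = (4:A) ^ (n+1) * x ^ 2 * z ^ (n+1)
    rw [ih]
    have hw4 : w * ((4:A) ^ n * x ^ 2 * z ^ n) = (4:A) ^ n * (w * (x ^ 2 * z ^ n)) := by
      rw [mul_assoc ((4:A)^n), ← mul_assoc w, ← (h4 w).eq, mul_assoc]
    calc (4:A) ^ n * x ^ 2 * z ^ n * w - w * ((4:A) ^ n * x ^ 2 * z ^ n)
        = (4:A) ^ n * (x ^ 2 * (z ^ n * w)) - (4:A) ^ n * (w * (x ^ 2 * z ^ n)) := by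
          rw [hw4]; noncomm_ring
      _ = (4:A) ^ n * ((x ^ 2 * w - w * x ^ 2) * z ^ n) := by rw [hzn]; noncomm_ring
      _ = (4:A) ^ n * ((4 * x ^ 2 * z) * z ^ n) := by rw [key]
      _ = (4:A) ^ (n+1) * x ^ 2 * z ^ (n+1) := by rw [pow_succ, pow_succ' z]; noncomm_ring
end

section
/- Let L be a Lie algebra over a field, and let M be a Lie ideal of L such that M is nilpotent and the quotient L/[M,M] is nilpotent. Then L is nilpotent. (Stewart's theorem) -/
namespace Stmt15Aux

variable {F L : Type*} [Field F] [LieRing L] [LieAlgebra F L] (M : LieIdeal F L)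

/-- `D M k` is `γ_{k+1}(M)` as an ideal of `L`. -/
def D : ℕ → LieIdeal F L
  | 0 => M
  | k+1 => ⁅M, D k⁆

/-- `A M s` is the `s`-th term of the lower central series of `M` as an `L`-module. -/
def A : ℕ → LieIdeal F L
  | 0 => M
  | s+1 => ⁅(⊤ : LieIdeal F L), A s⁆

lemma leib (I J N : LieIdeal F L) : ⁅I, ⁅J, N⁆⁆ ≤ ⁅⁅I, J⁆, N⁆ ⊔ ⁅J, ⁅I, N⁆⁆ := by
  rw [LieSubmodule.lie_le_iff]
  intro x hx m hm
  rw [← LieSubmodule.mem_toSubmodule, LieSubmodule.lieIdeal_oper_eq_linear_span'] at hm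
  refine Submodule.span_induction ?_ ?_ ?_ ?_ hm
  · rintro m ⟨y, hy, n, hn, rfl⟩
    rw [leibniz_lie x y n]
    refine add_mem ?_ ?_
    · exact le_sup_left (α := LieIdeal F L) (LieSubmodule.lie_mem_lie (LieSubmodule.lie_mem_lie hx hy) hn)
    · exact le_sup_right (α := LieIdeal F L) (LieSubmodule.lie_mem_lie hy (LieSubmodule.lie_mem_lie hx hn))
  · simp
  · intro a b _ _ ha hb; rw [lie_add]; exact add_mem ha hb
  · intro t a _ ha; rw [lie_smul]; exact Submodule.smul_mem _ t ha

lemma D_le_M (k : ℕ) : D M k ≤ M := by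
  cases k with
  | zero => exact le_rfl
  | succ k => exact LieSubmodule.lie_le_left M (D M k)

lemma D_bracket : ∀ q p, ⁅D M p, D M q⁆ ≤ D M (p + q + 1)
  | 0, p => by
    rw [LieSubmodule.lie_comm]
    exact le_rfl
  | q+1, p => by
    refine (leib (D M p) M (D M q)).trans (sup_le ?_ ?_)
    · have h1 : ⁅D M p, M⁆ ≤ D M (p+1) := by rw [LieSubmodule.lie_comm]; exact le_rfl
      have h2 := (LieSubmodule.mono_lie_left _ h1).trans (D_bracket q (p+1))
      have e : p + 1 + q + 1 = p + (q+1) + 1 := by omega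
      rwa [e] at h2
    · have h2 := LieSubmodule.mono_lie_right M (D_bracket q p)
      have e : p + q + 1 + 1 = p + (q+1) + 1 := by omega
      exact h2.trans (by rw [← e]; exact le_rfl)

lemma A_le_M (s : ℕ) : A M s ≤ M := by
  induction s with
  | zero => exact le_rfl
  | succ s ih => exact (LieSubmodule.lie_le_right _ _).trans ih

lemma A_le_lcs (s : ℕ) : A M s ≤ LieModule.lowerCentralSeries F L L s := by
  induction s with
  | zero => exact le_top
  | succ s ih =>
    rw [LieModule.lowerCentralSeries_succ]
    exact LieSubmodule.mono_lie_right _ ih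

/-- `X M i s`: sums of `(i+1)`-fold brackets of terms `A M a` with total weight `s`. -/
def X : ℕ → ℕ → LieIdeal F L
  | 0, s => A M s
  | i+1, s => (Finset.range (s+1)).sup fun a => ⁅A M a, X i (s-a)⁆

lemma X_le_D (i s : ℕ) : X M i s ≤ D M i := by
  induction i generalizing s with
  | zero => exact A_le_M M s
  | succ i ih =>
    refine Finset.sup_le fun a _ => ?_
    exact LieSubmodule.mono_lie (A_le_M M a) (ih _)

lemma lie_finset_sup (I : LieIdeal F L) (s : Finset ℕ) (f : ℕ → LieIdeal F L) :
    ⁅I, s.sup f⁆ = s.sup fun a => ⁅I, f a⁆ := by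
  induction s using Finset.cons_induction with
  | empty => simp [LieSubmodule.lie_bot]
  | cons a s ha ih => simp [Finset.sup_cons, LieSubmodule.lie_sup, ih]

lemma lie_X (i s : ℕ) : ⁅(⊤ : LieIdeal F L), X M i s⁆ ≤ X M i (s+1) := by
  induction i generalizing s with
  | zero => exact le_rfl
  | succ i ih =>
    show ⁅(⊤ : LieIdeal F L), (Finset.range (s+1)).sup fun a => ⁅A M a, X M i (s-a)⁆⁆ ≤ _
    rw [lie_finset_sup]
    refine Finset.sup_le fun a ha => ?_
    rw [Finset.mem_range] at ha
    have ha' : a ≤ s := by omega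
    refine (leib ⊤ (A M a) (X M i (s-a))).trans (sup_le ?_ ?_)
    · have h1 : ⁅(⊤ : LieIdeal F L), A M a⁆ = A M (a+1) := rfl
      rw [h1]
      have : ⁅A M (a+1), X M i (s-a)⁆ ≤ (Finset.range (s+2)).sup
          fun b => ⁅A M b, X M i (s+1-b)⁆ := by
        have := Finset.le_sup (f := fun b => ⁅A M b, X M i (s+1-b)⁆)
          (Finset.mem_range.mpr (by omega : a+1 < s+2))
        refine le_trans ?_ this
        simp only [show s + 1 - (a+1) = s - a from by omega]
        exact le_rfl
      exact this
    · have h2 : ⁅A M a, ⁅(⊤ : LieIdeal F L), X M i (s-a)⁆⁆ ≤ ⁅A M a, X M i (s-a+1)⁆ :=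
        LieSubmodule.mono_lie_right _ (ih _)
      refine h2.trans ?_
      have := Finset.le_sup (f := fun b => ⁅A M b, X M i (s+1-b)⁆)
        (Finset.mem_range.mpr (by omega : a < s+2))
      refine le_trans ?_ this
      simp only [show s + 1 - a = s - a + 1 from by omega]
      exact le_rfl

lemma D_le_X (i : ℕ) : D M i ≤ X M i 0 := by
  induction i with
  | zero => exact le_rfl
  | succ i ih =>
    show ⁅M, D M i⁆ ≤ (Finset.range 1).sup fun a => ⁅A M a, X M i (0-a)⁆
    have := Finset.le_sup (f := fun a => ⁅A M a, X M i (0-a)⁆)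
      (Finset.mem_range.mpr (by omega : 0 < 1))
    refine le_trans ?_ this
    exact LieSubmodule.mono_lie_right _ ih

lemma X_le_D_succ (c : ℕ) (hc : LieModule.lowerCentralSeries F L L c ≤ D M 1) :
    ∀ i s, (c-1)*(i+1)+1 ≤ s → X M i s ≤ D M (i+1) := by
  intro i
  induction i with
  | zero =>
    intro s hs
    have hsc : c ≤ s := by omega
    exact (A_le_lcs M s).trans ((LieModule.antitone_lowerCentralSeries F L L hsc).trans hc)
  | succ i ih =>
    intro s hs
    refine Finset.sup_le fun a ha => ?_
    rw [Finset.mem_range] at ha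
    rcases le_or_gt c a with h | h
    · -- A a ≤ D 1, X i _ ≤ D i, bracket ≤ D (i+2)
      have h1 : A M a ≤ D M 1 :=
        (A_le_lcs M a).trans ((LieModule.antitone_lowerCentralSeries F L L h).trans hc)
      have := (LieSubmodule.mono_lie h1 (X_le_D M i (s-a))).trans (D_bracket M i 1)
      refine this.trans ?_
      convert le_rfl using 2
      omega
    · -- a ≤ c-1, so s - a is big
      have hb : (c-1)*(i+1)+1 ≤ s - a := by
        have e : (c-1)*(i+1+1) = (c-1)*(i+1) + (c-1) := by ring
        omega
      exact LieSubmodule.mono_lie (A_le_M M a) (ih _ hb)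

end Stmt15Aux

namespace Stmt15Aux
variable {F L : Type*} [Field F] [LieRing L] [LieAlgebra F L] (M : LieIdeal F L)

lemma key (c : ℕ) (hc : LieModule.lowerCentralSeries F L L c ≤ D M 1) (i : ℕ) :
    ∃ n, A M n ≤ D M i := by
  induction i with
  | zero => exact ⟨0, le_rfl⟩
  | succ i ihx =>
    obtain ⟨n, hn⟩ := ihx
    refine ⟨n + ((c-1)*(i+1)+1), ?_⟩
    have h1 : ∀ s, A M (n + s) ≤ X M i s := by
      intro s; induction s with
      | zero => exact hn.trans (D_le_X M i)
      | succ s ih =>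
        rw [show n + (s+1) = (n+s)+1 from rfl]
        exact (LieSubmodule.mono_lie_right _ ih).trans (lie_X M i s)
    exact (h1 _).trans (X_le_D_succ M c hc i _ le_rfl)

lemma exists_D_eq_bot (hM : LieRing.IsNilpotent M) : ∃ d, D M d = ⊥ := by
  obtain ⟨k, hk⟩ := (LieModule.isNilpotent_iff F M M).mp hM
  refine ⟨k, ?_⟩
  have h : ∀ j, LieSubmodule.toSubmodule (D M j) ≤ Submodule.map (M.incl : ↥M →ₗ⁅F⁆ L).toLinearMap
      (LieSubmodule.toSubmodule (LieModule.lowerCentralSeries F M M j)) := by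
    intro j
    induction j with
    | zero =>
      simp only [D, LieModule.lowerCentralSeries_zero, LieSubmodule.top_toSubmodule,
        Submodule.map_top]
      exact le_of_eq (Submodule.range_subtype _).symm
    | succ j ih =>
      rw [show D M (j+1) = ⁅M, D M j⁆ from rfl, LieSubmodule.lieIdeal_oper_eq_linear_span']
      rw [Submodule.span_le]
      rintro m ⟨x, hx, n, hn, rfl⟩
      rw [← LieSubmodule.mem_toSubmodule] at hn
      obtain ⟨y, hy, rfl⟩ := ih hn
      refine ⟨⁅(⟨x, hx⟩ : ↥M), y⁆, ?_, ?_⟩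
      · show _ ∈ LieSubmodule.toSubmodule (LieModule.lowerCentralSeries F M M (j+1))
        rw [LieSubmodule.mem_toSubmodule _, LieModule.lowerCentralSeries_succ]
        exact LieSubmodule.lie_mem_lie (LieSubmodule.mem_top _)
          ((LieSubmodule.mem_toSubmodule _).mp hy)
      · rfl
  have h2 : LieSubmodule.toSubmodule (D M k) ≤ ⊥ := by
    specialize h k
    rw [hk] at h
    simpa using h
  rw [← LieSubmodule.toSubmodule_inj, LieSubmodule.bot_toSubmodule]
  exact le_bot_iff.mp h2

end Stmt15Aux

/-- Stewart: if `M` is a nilpotent Lie ideal of `L` and `L/[M,M]`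
is nilpotent, then `L` is nilpotent. -/
theorem stmt15 (F L : Type*) [Field F] [LieRing L] [LieAlgebra F L]
    (M : LieIdeal F L) (hM : LieRing.IsNilpotent M)
    (hQ : LieRing.IsNilpotent (L ⧸ (⁅M, M⁆ : LieIdeal F L))) :
    LieRing.IsNilpotent L := by
  obtain ⟨d, hd⟩ := Stmt15Aux.exists_D_eq_bot M hM
  have h2 : LieModule.IsNilpotent L (L ⧸ (⁅M, M⁆ : LieIdeal F L)) := by
    obtain ⟨k, hk⟩ := (LieModule.isNilpotent_iff F _ _).mp hQ
    exact (LieModule.isNilpotent_iff F _ _).mpr ⟨k, by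
      simp [← LieSubmodule.toSubmodule_inj, coe_lowerCentralSeries_ideal_quot_eq, hk]⟩
  rw [LieModule.isNilpotent_quotient_iff F] at h2
  obtain ⟨c, hc⟩ := h2
  have hc' : LieModule.lowerCentralSeries F L L c ≤ Stmt15Aux.D M 1 := hc
  obtain ⟨n, hn⟩ := Stmt15Aux.key M c hc' d
  refine (LieModule.isNilpotent_iff F L L).mpr ⟨c + n, ?_⟩
  have hchain : ∀ s, LieModule.lowerCentralSeries F L L (c + s) ≤ Stmt15Aux.A M s := by
    intro s; induction s with
    | zero =>
      exact (LieModule.antitone_lowerCentralSeries F L L (by omega : c ≤ c + 0)).trans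
        (hc'.trans (Stmt15Aux.D_le_M M 1))
    | succ s ih =>
      rw [show c + (s+1) = (c+s)+1 from rfl, LieModule.lowerCentralSeries_succ]
      exact LieSubmodule.mono_lie_right _ ih
  exact le_bot_iff.mp ((hchain n).trans (hn.trans hd.le))
end

section
/- Let A be a unital associative ring of prime characteristic p and let x, b ∈ A satisfy [x, b] = b. Then for every natural number m, the iterated commutator [b², x², ..., x²] with x² appearing pᵐ times equals (-4)^(pᵐ) b² (x^(pᵐ) + 1). -/
lemma lieIter_formula {A : Type*} [Ring A] (x b : A) (h : x * b - b * x = b) (n : ℕ) :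
    lieIter (b ^ 2) (x ^ 2) n = b ^ 2 * ((-4 : A) * (x + 1)) ^ n := by
  have hxb : x * b = b * (x + 1) := by
    rw [mul_add, mul_one]; exact sub_eq_iff_eq_add'.mp h
  have h2 : x * b ^ 2 = b ^ 2 * (x + 2) := by
    calc x * b ^ 2 = (x * b) * b := by noncomm_ring
      _ = (b * (x + 1)) * b := by rw [hxb]
      _ = b * (x * b) + b * b := by noncomm_ring
      _ = b * (b * (x + 1)) + b * b := by rw [hxb]
      _ = b ^ 2 * (x + 2) := by noncomm_ring
  have key : x ^ 2 * b ^ 2 = b ^ 2 * (x + 2) ^ 2 := by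
    calc x ^ 2 * b ^ 2 = x * (x * b ^ 2) := by noncomm_ring
      _ = x * (b ^ 2 * (x + 2)) := by rw [h2]
      _ = (x * b ^ 2) * (x + 2) := by noncomm_ring
      _ = (b ^ 2 * (x + 2)) * (x + 2) := by rw [h2]
      _ = b ^ 2 * (x + 2) ^ 2 := by noncomm_ring
  set u : A := (-4 : A) * (x + 1) with hu
  have hx1 : Commute x (x + 1) := (Commute.refl x).add_right (Commute.one_right x)
  have hxu : Commute x u := (Commute.ofNat_right x 4).neg_right.mul_right hx1
  induction n with
  | zero => simp [lieIter]
  | succ n ih =>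
    have c2 : Commute ((x + 2) ^ 2) (u ^ n) := by
      have hx2u : Commute (x + 2) u :=
        hxu.add_left (((Commute.ofNat_left 2 (4 : A)).neg_right).mul_right
          ((Commute.ofNat_left 2 x).add_right (Commute.one_right 2)))
      exact (hx2u.pow_right n).pow_left 2
    have hdiff : x ^ 2 - (x + 2) ^ 2 = u := by rw [hu]; noncomm_ring; simp
    calc lieIter (b ^ 2) (x ^ 2) (n + 1)
        = (b ^ 2 * u ^ n) * x ^ 2 - x ^ 2 * (b ^ 2 * u ^ n) := by rw [lieIter, ih]
      _ = b ^ 2 * (u ^ n * x ^ 2) - (x ^ 2 * b ^ 2) * u ^ n := by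
          rw [mul_assoc, ← mul_assoc (x ^ 2)]
      _ = b ^ 2 * (u ^ n * x ^ 2) - b ^ 2 * ((x + 2) ^ 2 * u ^ n) := by
          rw [key, mul_assoc]
      _ = b ^ 2 * (u ^ n * x ^ 2) - b ^ 2 * (u ^ n * (x + 2) ^ 2) := by rw [c2.eq]
      _ = b ^ 2 * (u ^ n * (x ^ 2 - (x + 2) ^ 2)) := by noncomm_ring
      _ = b ^ 2 * u ^ (n + 1) := by rw [hdiff, ← pow_succ]

/-- in a unital associative ring of prime characteristic `p`, if
`[x, b] = b`, then `[b², x², ..., x²]` (with `x²` appearing `pᵐ` times) equals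
`(-4)^(pᵐ) b² (x^(pᵐ) + 1)`. -/
theorem stmt18 (A : Type*) [Ring A] (p : ℕ) [Fact p.Prime] [CharP A p]
    (x b : A) (h : x * b - b * x = b) (m : ℕ) :
    lieIter (b ^ 2) (x ^ 2) (p ^ m) = (-4 : A) ^ (p ^ m) * b ^ 2 * (x ^ (p ^ m) + 1) := by
  rw [lieIter_formula x b h]
  have hc : Commute (-4 : A) (x + 1) := (Commute.ofNat_left 4 _).neg_left
  rw [hc.mul_pow, add_pow_char_pow_of_commute p m (Commute.one_right x), one_pow]
  have h4 : Commute (b ^ 2) ((-4 : A) ^ (p ^ m)) :=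
    (((Commute.ofNat_right b 4).neg_right).pow_right _).pow_left 2
  rw [← mul_assoc, h4.eq, mul_assoc, ← mul_assoc]
end
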